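/- Let f : F_2^n → F_2^n be a Boolean network. If f has a cyclic attractor (in particular, if f has no fixed point), then the global interaction graph G(f) has a negative cycle. -/

import Mathlib

/-- States of a Boolean network on `n` components: `F_2^n`. -/
abbrev St (n : ℕ) := Fin n → ZMod 2

/-- The unit vector `e^i`. -/
def uv {n : ℕ} (i : Fin n) : St n := fun j => if j = i then 1 else 0

/-- There is an edge from `j` to `i` in the local interaction graph `G(f)(x)`,
i.e. `∂_j f_i (x) = 1`. -/
def hasEdge {n : ℕ} (f : St n → St n) (x : St n) (j i : Fin n) : Prop :=
  f (x + uv j) i ≠ f x i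

/-- `(j,i)` is a positive edge of `G(f)(x)`. -/
def edgePos {n : ℕ} (f : St n → St n) (x : St n) (j i : Fin n) : Prop :=
  hasEdge f x j i ∧ x j = f x i

/-- `(j,i)` is a negative edge of `G(f)(x)`. -/
def edgeNeg {n : ℕ} (f : St n → St n) (x : St n) (j i : Fin n) : Prop :=
  hasEdge f x j i ∧ x j ≠ f x i

/-- The local interaction graph `G(f)(x)` has a negative (elementary, directed) cycle:
a cyclic sequence of pairwise distinct vertices, each consecutive pair being an edge of
`G(f)(x)`, with an odd number of negative edges. -/
def hasNegCycleAt {n : ℕ} (f : St n → St n) (x : St n) : Prop :=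
  ∃ (m : ℕ) (v : Fin (m + 1) → Fin n), Function.Injective v ∧
    (∀ k, hasEdge f x (v k) (v (k + 1))) ∧
    Odd (Nat.card {k : Fin (m + 1) // edgeNeg f x (v k) (v (k + 1))})

/-- `f` is an and-net: each coordinate function is a product of literals. -/
def IsAndNet {n : ℕ} (f : St n → St n) : Prop :=
  ∀ i : Fin n, ∃ P N : Finset (Fin n), Disjoint P N ∧
    ∀ x : St n, f x i = (∏ j ∈ P, x j) * ∏ j ∈ N, (x j + 1)

/-- `(j,i)` is a positive edge of the global interaction graph `G(f)`. -/
def gEdgePos {n : ℕ} (f : St n → St n) (j i : Fin n) : Prop := ∃ x, edgePos f x j i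

/-- `(j,i)` is a negative edge of the global interaction graph `G(f)`. -/
def gEdgeNeg {n : ℕ} (f : St n → St n) (j i : Fin n) : Prop := ∃ x, edgeNeg f x j i

/-- `(j,i)` is an edge of the global interaction graph `G(f)`. -/
def gEdge {n : ℕ} (f : St n → St n) (j i : Fin n) : Prop := gEdgePos f j i ∨ gEdgeNeg f j i

/-- Reachability in the asynchronous dynamics `Γ(f)`. -/
def Reach {n : ℕ} (f : St n → St n) : St n → St n → Prop :=
  Relation.ReflTransGen (fun x y => ∃ i, f x i ≠ x i ∧ y = x + uv i)

/-- `A` is a cyclic attractor of `f`: a nonempty terminal strongly connected component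
of `Γ(f)` (nonempty, closed under the moves of `Γ(f)`, strongly connected) which is not
a singleton (equivalently, does not consist of a fixed point). -/
def IsCyclicAttractor {n : ℕ} (f : St n → St n) (A : Set (St n)) : Prop :=
  A.Nonempty ∧
  (∀ x ∈ A, ∀ i, f x i ≠ x i → x + uv i ∈ A) ∧
  (∀ x ∈ A, ∀ y ∈ A, Reach f x y) ∧
  ¬ ∃ a, A = {a}

namespace S16
variable {n : ℕ}

lemma zmod2_add_self (a : ZMod 2) : a + a = 0 := by revert a; decide

lemma zmod2_add_one_one (a : ZMod 2) : a + 1 + 1 = a := by revert a; decide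

lemma zmod2_eq_add_one_of_ne {a b : ZMod 2} (h : a ≠ b) : a = b + 1 := by
  revert h; revert a b; decide

lemma zmod2_eq_zero_of_ne_one {a : ZMod 2} (h : a ≠ 1) : a = 0 := by
  revert h; revert a; decide

lemma zmod2_eq_one_of_ne_zero {a : ZMod 2} (h : a ≠ 0) : a = 1 := by
  revert h; revert a; decide

lemma add_uv_same (x : St n) (j : Fin n) : (x + uv j) j = x j + 1 := by
  simp [uv]

lemma add_uv_other (x : St n) {i j : Fin n} (h : i ≠ j) : (x + uv j) i = x i := by
  simp [uv, h]

lemma add_add_self (x y : St n) : x + y + y = x := by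
  funext i
  show x i + y i + y i = x i
  rw [add_assoc, zmod2_add_self, add_zero]

open Classical in
noncomputable def diffs (x y : St n) : Finset (Fin n) :=
  Finset.univ.filter (fun i => x i ≠ y i)

lemma diffs_flip {x y : St n} {j : Fin n} (h : x j ≠ y j) :
    diffs (x + uv j) y = (diffs x y).erase j := by
  classical
  ext i
  simp only [diffs, Finset.mem_filter, Finset.mem_univ, true_and, Finset.mem_erase]
  by_cases hij : i = j
  · subst hij
    have : (x + uv i) i = y i := by
      rw [add_uv_same, zmod2_eq_add_one_of_ne h, zmod2_add_one_one]
    simp [this]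
  · rw [add_uv_other x hij]
    tauto

lemma diffs_card_flip {x y : St n} {j : Fin n} (h : x j ≠ y j) :
    (diffs (x + uv j) y).card < (diffs x y).card := by
  classical
  rw [diffs_flip h]
  apply Finset.card_erase_lt_of_mem
  simp [diffs, h]

lemma eq_of_diffs_zero {x y : St n} (h : (diffs x y).card = 0) : x = y := by
  classical
  funext i
  by_contra hi
  have : i ∈ diffs x y := by simp [diffs, hi]
  rw [Finset.card_eq_zero] at h
  simp [h] at this

/-- A function invariant under flipping coordinates outside `T` depends only on `T`. -/
lemma indep_of_no_edge (φ : St n → ZMod 2) (T : Finset (Fin n))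
    (h : ∀ (x : St n) (j : Fin n), j ∉ T → φ (x + uv j) = φ x) :
    ∀ x y : St n, (∀ j ∈ T, x j = y j) → φ x = φ y := by
  classical
  suffices H : ∀ (k : ℕ) (x y : St n), (diffs x y).card ≤ k →
      (∀ j ∈ T, x j = y j) → φ x = φ y by
    intro x y hxy; exact H (diffs x y).card x y le_rfl hxy
  intro k
  induction k with
  | zero =>
    intro x y hc _
    rw [eq_of_diffs_zero (Nat.le_zero.mp hc)]
  | succ k ih =>
    intro x y hc hxy
    by_cases hxe : x = y
    · rw [hxe]
    · obtain ⟨j, hj⟩ := Function.ne_iff.mp hxe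
      have hjT : j ∉ T := fun hm => hj (hxy j hm)
      have h1 : φ (x + uv j) = φ x := h x j hjT
      have h2 : ∀ j' ∈ T, (x + uv j) j' = y j' := by
        intro j' hj'
        rw [add_uv_other x (by rintro rfl; exact hjT hj'), hxy j' hj']
      have h3 : (diffs (x + uv j) y).card ≤ k := by
        have := diffs_card_flip (y := y) hj
        omega
      rw [← h1, ih _ _ h3 h2]

/-- A function all of whose realized edges are positive is monotone. -/
lemma mono_of_unate (φ : St n → ZMod 2)
    (h : ∀ (x : St n) (j : Fin n), φ (x + uv j) ≠ φ x → φ x = x j) :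
    ∀ x y : St n, (∀ i, x i = 1 → y i = 1) → φ x = 1 → φ y = 1 := by
  classical
  suffices H : ∀ (k : ℕ) (x y : St n), (diffs x y).card ≤ k →
      (∀ i, x i = 1 → y i = 1) → φ x = 1 → φ y = 1 by
    intro x y hxy; exact H (diffs x y).card x y le_rfl hxy
  intro k
  induction k with
  | zero =>
    intro x y hc _ hx
    rwa [eq_of_diffs_zero (Nat.le_zero.mp hc)] at hx
  | succ k ih =>
    intro x y hc hxy hx
    by_cases hxe : x = y
    · rwa [hxe] at hx
    · obtain ⟨j, hj⟩ := Function.ne_iff.mp hxe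
      have hxj : x j = 0 := by
        by_contra hne
        have h1 : x j = 1 := zmod2_eq_one_of_ne_zero hne
        exact hj (by rw [h1, hxy j h1])
      have hyj : y j = 1 := by
        apply zmod2_eq_one_of_ne_zero
        intro h0; rw [h0, ← hxj] at hj; exact hj rfl
      have hφ' : φ (x + uv j) = 1 := by
        by_cases he : φ (x + uv j) = φ x
        · rw [he, hx]
        · have := h x j he
          rw [hxj] at this; rw [this] at hx
          exact absurd hx (by decide)
      have h2 : ∀ i, (x + uv j) i = 1 → y i = 1 := by
        intro i hi
        by_cases hij : i = j
        · subst hij; exact hyj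
        · rw [add_uv_other x hij] at hi; exact hxy i hi
      have h3 : (diffs (x + uv j) y).card ≤ k := by
        have := diffs_card_flip (y := y) hj
        omega
      exact ih _ _ h3 h2 hφ'

open Classical in
noncomputable def ones (x : St n) : Finset (Fin n) :=
  Finset.univ.filter (fun i => x i = 1)

lemma ones_card_le (x : St n) : (ones x).card ≤ n := by
  classical
  calc (ones x).card ≤ Finset.univ.card := Finset.card_filter_le _ _
  _ = n := by simp

lemma ones_flip_up {x : St n} {i : Fin n} (h : x i = 0) :
    ones (x + uv i) = insert i (ones x) := by
  classical
  ext i'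
  simp only [ones, Finset.mem_filter, Finset.mem_univ, true_and, Finset.mem_insert]
  by_cases hii : i' = i
  · subst hii; rw [add_uv_same, h]; simp
  · rw [add_uv_other x hii]; tauto

lemma ones_flip_down {x : St n} {i : Fin n} (h : x i = 1) :
    ones (x + uv i) = (ones x).erase i := by
  classical
  ext i'
  simp only [ones, Finset.mem_filter, Finset.mem_univ, true_and, Finset.mem_erase]
  by_cases hii : i' = i
  · subst hii; rw [add_uv_same, h]; simp
  · rw [add_uv_other x hii]; tauto

/-- From any state, a monotone network reaches a fixed point asynchronously. -/
lemma mono_reach (h : St n → St n)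
    (mono : ∀ x y : St n, (∀ i, x i = 1 → y i = 1) → ∀ i, h x i = 1 → h y i = 1)
    (x : St n) : ∃ z, Reach h x z ∧ h z = z := by
  classical
  -- Phase 1 : climb
  have phase1 : ∀ (k : ℕ) (x : St n), n - (ones x).card ≤ k →
      ∃ y, Reach h x y ∧ (∀ i, h y i = 1 → y i = 1) := by
    intro k
    induction k with
    | zero =>
      intro x hc
      refine ⟨x, Relation.ReflTransGen.refl, ?_⟩
      intro i _
      have hcard : (ones x).card = n := le_antisymm (ones_card_le x) (by omega)
      have : ones x = Finset.univ := Finset.eq_univ_of_card _ (by simp [hcard])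
      have : i ∈ ones x := this ▸ Finset.mem_univ i
      simpa [ones] using this
    | succ k ih =>
      intro x hc
      by_cases hx : ∀ i, h x i = 1 → x i = 1
      · exact ⟨x, Relation.ReflTransGen.refl, hx⟩
      · push_neg at hx
        obtain ⟨i, hhi, hxi⟩ := hx
        have hxi0 : x i = 0 := zmod2_eq_zero_of_ne_one hxi
        have hstep : h x i ≠ x i := by rw [hhi, hxi0]; decide
        have hcard : (ones (x + uv i)).card = (ones x).card + 1 := by
          rw [ones_flip_up hxi0]
          rw [Finset.card_insert_of_notMem (by simp [ones, hxi0])]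
        obtain ⟨y, hry, hy⟩ := ih (x + uv i) (by omega)
        exact ⟨y, Relation.ReflTransGen.head ⟨i, hstep, rfl⟩ hry, hy⟩
  -- Phase 2 : descend
  have phase2 : ∀ (k : ℕ) (y : St n), (ones y).card ≤ k →
      (∀ i, h y i = 1 → y i = 1) → ∃ z, Reach h y z ∧ h z = z := by
    intro k
    induction k with
    | zero =>
      intro y hc hy
      refine ⟨y, Relation.ReflTransGen.refl, ?_⟩
      funext i
      have hc0 : ones y = ∅ := Finset.card_eq_zero.mp (Nat.le_zero.mp hc)
      have hyi : y i = 0 := by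
        by_contra hne
        have : i ∈ ones y := by simp [ones, zmod2_eq_one_of_ne_zero hne]
        simp [hc0] at this
      have : h y i ≠ 1 := fun h1 => by rw [hy i h1] at hyi; exact absurd hyi (by decide)
      rw [zmod2_eq_zero_of_ne_one this, hyi]
    | succ k ih =>
      intro y hc hy
      by_cases hfix : h y = y
      · exact ⟨y, Relation.ReflTransGen.refl, hfix⟩
      · obtain ⟨i, hi⟩ := Function.ne_iff.mp hfix
        have hyi : y i = 1 := by
          by_contra hne
          have h0 : y i = 0 := zmod2_eq_zero_of_ne_one hne
          have : h y i = 1 := zmod2_eq_one_of_ne_zero (by rw [h0] at hi; exact hi)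
          rw [hy i this] at h0; exact absurd h0 (by decide)
        have hhyi : h y i = 0 := by
          have : h y i ≠ 1 := fun h1 => hi (by rw [h1, hyi])
          exact zmod2_eq_zero_of_ne_one this
        have hley : ∀ i', (y + uv i) i' = 1 → y i' = 1 := by
          intro i' h1
          by_cases hii : i' = i
          · subst hii; exact hyi
          · rwa [add_uv_other y hii] at h1
        have hy'inv : ∀ i', h (y + uv i) i' = 1 → (y + uv i) i' = 1 := by
          intro i' h1
          have hhy : h y i' = 1 := mono (y + uv i) y hley i' h1
          by_cases hii : i' = i
          · subst hii; rw [hhyi] at hhy; exact absurd hhy (by decide)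
          · rw [add_uv_other y hii]; exact hy i' hhy
        have hcard : (ones (y + uv i)).card ≤ k := by
          have he : ones (y + uv i) = (ones y).erase i := ones_flip_down hyi
          have : i ∈ ones y := by simp [ones, hyi]
          rw [he, Finset.card_erase_of_mem this]
          omega
        obtain ⟨z, hrz, hz⟩ := ih (y + uv i) hcard hy'inv
        exact ⟨z, Relation.ReflTransGen.head ⟨i, hi, rfl⟩ hrz, hz⟩
  obtain ⟨y, hry, hy⟩ := phase1 n x (by omega)
  obtain ⟨z, hrz, hz⟩ := phase2 n y (ones_card_le y) hy
  exact ⟨z, Relation.ReflTransGen.trans hry hrz, hz⟩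

end S16

theorem List.chain'_append {α : Type*} {R : α → α → Prop} {l₁ l₂ : List α} :
    List.Chain' R (l₁ ++ l₂) ↔ List.Chain' R l₁ ∧ List.Chain' R l₂ ∧
      ∀ x ∈ l₁.getLast?, ∀ y ∈ l₂.head?, R x y := List.isChain_append

theorem List.chain'_singleton {α : Type*} {R : α → α → Prop} (a : α) : List.Chain' R [a] :=
  List.isChain_singleton a

theorem List.chain'_cons' {α : Type*} {R : α → α → Prop} {x : α} {l : List α} :
    List.Chain' R (x :: l) ↔ (∀ y ∈ l.head?, R x y) ∧ List.Chain' R l := List.isChain_cons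

theorem List.chain'_iff_get {α : Type*} {R : α → α → Prop} {l : List α} :
    List.Chain' R l ↔ ∀ (i : ℕ) (h : i < l.length - 1),
      R (l.get ⟨i, by omega⟩) (l.get ⟨i + 1, by omega⟩) := by
  show List.IsChain R l ↔ _
  rw [List.isChain_iff_getElem]
  simp only [List.get_eq_getElem]
  constructor
  · intro h i hi; exact h i (by omega)
  · intro h i hi; exact h i (by omega)

namespace S16
variable {α : Type*}

def wsuml (w : α → α → ZMod 2) : List α → ZMod 2
  | [] => 0
  | [_] => 0
  | a :: b :: l => w a b + wsuml w (b :: l)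

@[simp] lemma wsuml_nil (w : α → α → ZMod 2) : wsuml w [] = 0 := rfl
@[simp] lemma wsuml_single (w : α → α → ZMod 2) (a : α) : wsuml w [a] = 0 := rfl
@[simp] lemma wsuml_cons_cons (w : α → α → ZMod 2) (a b : α) (l : List α) :
    wsuml w (a :: b :: l) = w a b + wsuml w (b :: l) := rfl

lemma wsuml_append (w : α → α → ZMod 2) (l1 l2 : List α) (x : α) :
    wsuml w (l1 ++ x :: l2) = wsuml w (l1 ++ [x]) + wsuml w (x :: l2) := by
  induction l1 with
  | nil => simp
  | cons b t ih =>
    cases t with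
    | nil => simp [add_assoc]
    | cons c t' =>
      have : (b :: c :: t') ++ x :: l2 = b :: ((c :: t') ++ x :: l2) := by simp
      rw [this]
      have h2 : (c :: t') ++ x :: l2 = c :: (t' ++ x :: l2) := by simp
      rw [h2]
      rw [wsuml_cons_cons]
      have h3 : c :: (t' ++ x :: l2) = (c :: t') ++ x :: l2 := by simp
      rw [h3, ih]
      have h4 : (b :: c :: t') ++ [x] = b :: c :: (t' ++ [x]) := by simp
      rw [h4, wsuml_cons_cons]
      have h5 : c :: (t' ++ [x]) = (c :: t') ++ [x] := by simp
      rw [h5, add_assoc]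

lemma exists_dup_decomp (l : List α) (h : ¬ l.Nodup) :
    ∃ (x : α) (l1 l2 l3 : List α), l = l1 ++ x :: l2 ++ x :: l3 := by
  induction l with
  | nil => exact absurd List.nodup_nil h
  | cons b t ih =>
    by_cases hb : b ∈ t
    · obtain ⟨s, r, rfl⟩ := List.append_of_mem hb
      exact ⟨b, [], s, r, by simp⟩
    · have : ¬ t.Nodup := fun hn => h (List.nodup_cons.mpr ⟨hb, hn⟩)
      obtain ⟨x, l1, l2, l3, rfl⟩ := ih this
      exact ⟨x, b :: l1, l2, l3, by simp⟩

lemma eq_cons_of_head? {l : List α} {u : α} (h : l.head? = some u) :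
    ∃ t, l = u :: t := by
  cases l with
  | nil => simp at h
  | cons b t => simp at h; exact ⟨t, by rw [h]⟩

lemma eq_concat_of_getLast? {l : List α} {u : α} (h : l.getLast? = some u) :
    ∃ p, l = p ++ [u] := by
  have hne : l ≠ [] := by rintro rfl; simp at h
  refine ⟨l.dropLast, ?_⟩
  have := List.dropLast_append_getLast hne
  rw [List.getLast?_eq_getLast hne] at h
  injection h with h
  rw [h] at this
  exact this.symm

section walks
variable (E : α → α → Prop) (w : α → α → ZMod 2)

lemma closed_walk_sum
    (Hel : ∀ (a : α) (l : List α), List.Chain' E (a :: l ++ [a]) → (a :: l).Nodup →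
      wsuml w (a :: l ++ [a]) = 0) :
    ∀ (N : ℕ) (a : α) (l : List α), l.length ≤ N → List.Chain' E (a :: l ++ [a]) →
      wsuml w (a :: l ++ [a]) = 0 := by
  intro N
  induction N with
  | zero =>
    intro a l hlen hch
    have : l = [] := List.length_eq_zero_iff.mp (Nat.le_zero.mp hlen)
    subst this
    exact Hel a [] hch (by simp)
  | succ N ih =>
    intro a l hlen hch
    by_cases hnd : (a :: l).Nodup
    · exact Hel a l hch hnd
    · obtain ⟨x, l1, l2, l3, hdd⟩ := exists_dup_decomp _ hnd
      cases l1 with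
      | nil =>
        have hlentot := congrArg List.length hdd
        simp only [List.nil_append, List.cons_append] at hdd
        injection hdd with h1 h2
        subst h1; subst h2
        -- cycle : a :: (l2 ++ a :: l3) ++ [a] = (a :: l2) ++ (a :: (l3 ++ [a]))
        have hshape : a :: (l2 ++ a :: l3) ++ [a] = (a :: l2) ++ (a :: (l3 ++ [a])) := by
          simp
        rw [hshape] at hch ⊢
        rw [List.chain'_append] at hch
        obtain ⟨hch1, hch2, hb⟩ := hch
        -- first closed walk  a :: l2 ++ [a]
        have hc1 : List.Chain' E (a :: l2 ++ [a]) := by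
          have : a :: l2 ++ [a] = (a :: l2) ++ [a] := by simp
          rw [this, List.chain'_append]
          refine ⟨hch1, List.chain'_singleton a, ?_⟩
          intro p hp q hq
          simp only [List.head?_cons, Option.mem_def, Option.some.injEq] at hq
          subst hq
          exact hb p hp a (by simp)
        have hlen1 : l2.length ≤ N := by
          simp at hlentot hlen ⊢
          omega
        have hlen2 : l3.length ≤ N := by
          simp at hlentot hlen ⊢
          omega
        have e1 := ih a l2 hlen1 hc1
        have e2 := ih a l3 hlen2 (by simpa using hch2)
        have hws : wsuml w ((a :: l2) ++ a :: (l3 ++ [a]))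
            = wsuml w ((a :: l2) ++ [a]) + wsuml w (a :: (l3 ++ [a])) :=
          wsuml_append w (a :: l2) (l3 ++ [a]) a
        rw [hws]
        have e1' : wsuml w ((a :: l2) ++ [a]) = 0 := by simpa using e1
        have e2' : wsuml w (a :: (l3 ++ [a])) = 0 := by simpa using e2
        rw [e1', e2', add_zero]
      | cons a' l1' =>
        have hlentot := congrArg List.length hdd
        simp only [List.cons_append] at hdd
        injection hdd with h1 h2
        subst h1; subst h2
        -- cycle : a :: (l1' ++ x :: l2 ++ x :: l3) ++ [a]
        --       = (a :: l1') ++ x :: (l2 ++ x :: (l3 ++ [a]))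
        have hshape : a :: (l1' ++ x :: l2 ++ x :: l3) ++ [a]
            = (a :: l1') ++ x :: (l2 ++ x :: (l3 ++ [a])) := by simp
        rw [hshape] at hch ⊢
        rw [List.chain'_append] at hch
        obtain ⟨hch1, hchR, hb1⟩ := hch
        have hshape2 : x :: (l2 ++ x :: (l3 ++ [a])) = (x :: l2) ++ (x :: (l3 ++ [a])) := by
          simp
        rw [hshape2] at hchR
        rw [List.chain'_append] at hchR
        obtain ⟨hch2, hch3, hb2⟩ := hchR
        -- closed walk C1 = x :: l2 ++ [x]
        have hc1 : List.Chain' E (x :: l2 ++ [x]) := by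
          have : x :: l2 ++ [x] = (x :: l2) ++ [x] := by simp
          rw [this, List.chain'_append]
          refine ⟨hch2, List.chain'_singleton x, ?_⟩
          intro p hp q hq
          simp only [List.head?_cons, Option.mem_def, Option.some.injEq] at hq
          subst hq
          exact hb2 p hp x (by simp)
        -- closed walk C2 = a :: (l1' ++ x :: l3) ++ [a]
        have hc2 : List.Chain' E (a :: (l1' ++ x :: l3) ++ [a]) := by
          have : a :: (l1' ++ x :: l3) ++ [a] = (a :: l1') ++ (x :: (l3 ++ [a])) := by simp
          rw [this, List.chain'_append]
          exact ⟨hch1, hch3, fun p hp q hq => by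
            simp only [List.head?_cons, Option.mem_def, Option.some.injEq] at hq
            subst hq
            exact hb1 p hp x (by simp)⟩
        have hlen1 : l2.length ≤ N := by simp at hlentot hlen ⊢; omega
        have hlen2 : (l1' ++ x :: l3).length ≤ N := by simp at hlentot hlen ⊢; omega
        have e1 := ih x l2 hlen1 hc1
        have e2 := ih a (l1' ++ x :: l3) hlen2 hc2
        -- sum computation
        have hws1 : wsuml w ((a :: l1') ++ x :: (l2 ++ x :: (l3 ++ [a])))
            = wsuml w ((a :: l1') ++ [x]) + wsuml w (x :: (l2 ++ x :: (l3 ++ [a]))) :=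
          wsuml_append w (a :: l1') _ x
        have hws2 : wsuml w ((x :: l2) ++ x :: (l3 ++ [a]))
            = wsuml w ((x :: l2) ++ [x]) + wsuml w (x :: (l3 ++ [a])) :=
          wsuml_append w (x :: l2) _ x
        have hws3 : wsuml w (a :: (l1' ++ x :: l3) ++ [a])
            = wsuml w ((a :: l1') ++ [x]) + wsuml w (x :: (l3 ++ [a])) := by
          have hsh : a :: (l1' ++ x :: l3) ++ [a] = (a :: l1') ++ x :: (l3 ++ [a]) := by simp
          rw [hsh]
          exact wsuml_append w (a :: l1') _ x
        rw [hws1]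
        have : wsuml w (x :: (l2 ++ x :: (l3 ++ [a])))
            = wsuml w ((x :: l2) ++ [x]) + wsuml w (x :: (l3 ++ [a])) := by
          rw [← hws2, ← hshape2]
        rw [this]
        have e1' : wsuml w ((x :: l2) ++ [x]) = 0 := by simpa using e1
        rw [e1', zero_add]
        rw [hws3] at e2
        exact e2

lemma exists_elementary_path :
    ∀ (N : ℕ) (l : List α), l.length ≤ N → List.Chain' E l → l ≠ [] →
      ∃ l', List.Chain' E l' ∧ l'.Nodup ∧ l'.head? = l.head? ∧ l'.getLast? = l.getLast? := by
  intro N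
  induction N with
  | zero =>
    intro l hlen _ hne
    exact absurd (List.length_eq_zero_iff.mp (Nat.le_zero.mp hlen)) hne
  | succ N ih =>
    intro l hlen hch hne
    by_cases hnd : l.Nodup
    · exact ⟨l, hch, hnd, rfl, rfl⟩
    · obtain ⟨x, l1, l2, l3, rfl⟩ := exists_dup_decomp _ hnd
      have hshape : l1 ++ x :: l2 ++ x :: l3 = l1 ++ ((x :: l2) ++ (x :: l3)) := by simp
      rw [hshape] at hch
      rw [List.chain'_append] at hch
      obtain ⟨hch1, hchR, hb1⟩ := hch
      rw [List.chain'_append] at hchR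
      obtain ⟨hch2, hch3, hb2⟩ := hchR
      have hcs : List.Chain' E (l1 ++ x :: l3) := by
        rw [List.chain'_append]
        exact ⟨hch1, hch3, fun p hp q hq => by
          simp only [List.head?_cons, Option.mem_def, Option.some.injEq] at hq
          subst hq
          exact hb1 p hp x (by simp)⟩
      have hlen' : (l1 ++ x :: l3).length ≤ N := by
        simp at hlen ⊢; omega
      obtain ⟨l', h1, h2, h3, h4⟩ := ih (l1 ++ x :: l3) hlen' hcs (by simp)
      refine ⟨l', h1, h2, ?_, ?_⟩
      · rw [h3]
        cases l1 with
        | nil => simp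
        | cons b t => simp
      · rw [h4]
        rw [List.getLast?_append]
        have : (l1 ++ x :: l2 ++ x :: l3).getLast? = (x :: l3).getLast? := by
          rw [hshape, List.getLast?_append, List.getLast?_append]
          have hsome : (x :: l3).getLast? = some ((x :: l3).getLast (by simp)) :=
            List.getLast?_eq_getLast _
          rw [hsome]
          simp
        rw [this]
        have hsome : (x :: l3).getLast? = some ((x :: l3).getLast (by simp)) :=
          List.getLast?_eq_getLast _
        rw [hsome]
        simp

lemma walk_of_rg {u t : α} (h : Relation.ReflTransGen E u t) :
    ∃ l : List α, List.Chain' E l ∧ l.head? = some u ∧ l.getLast? = some t := by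
  induction h with
  | refl => exact ⟨[u], List.chain'_singleton u, rfl, rfl⟩
  | @tail b c hsteps hstep ih =>
    obtain ⟨l, hch, hh, hl⟩ := ih
    refine ⟨l ++ [c], ?_, ?_, List.getLast?_concat⟩
    · rw [List.chain'_append]
      refine ⟨hch, List.chain'_singleton c, ?_⟩
      intro p hp q hq
      simp only [List.head?_cons, Option.mem_def, Option.some.injEq] at hq
      subst hq
      rw [hl] at hp
      simp only [Option.mem_def, Option.some.injEq] at hp
      subst hp
      exact hstep
    · rw [List.head?_append, hh]
      rfl

end walks

/-- vertex of a cyclic list -/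
def vfun (a : α) (l : List α) (k : Fin (l.length + 1)) : α := (a :: l).getD k.val a

lemma vfun_eq (a : α) (l : List α) (k : Fin (l.length + 1)) :
    vfun a l k = (a :: l ++ [a]).getD k.val a := by
  unfold vfun
  have h : (a :: l ++ [a]) = (a :: l) ++ [a] := by simp
  rw [h, List.getD_append _ _ _ _ (by simpa using k.isLt)]

lemma vfun_succ_eq (a : α) (l : List α) (k : Fin (l.length + 1)) :
    vfun a l (k + 1) = (a :: l ++ [a]).getD (k.val + 1) a := by
  unfold vfun
  rw [Fin.val_add_one]
  by_cases hk : k = Fin.last l.length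
  · rw [if_pos hk]
    have h : (a :: l ++ [a]) = (a :: l) ++ [a] := by simp
    have hval : k.val = l.length := by rw [hk]; rfl
    rw [h, hval]
    have h2 : ((a :: l) ++ [a]).getD (l.length + 1) a = a := by
      rw [List.getD_eq_getElem _ _ (by simp)]
      rw [List.getElem_append_right (by simp)]
      simp
    rw [h2]
    rfl
  · rw [if_neg hk]
    have hlt : k.val + 1 < l.length + 1 := by
      have := k.isLt
      have hne : k.val ≠ l.length := fun h => hk (Fin.ext h)
      omega
    have h : (a :: l ++ [a]) = (a :: l) ++ [a] := by simp
    rw [h, List.getD_append _ _ _ _ (by simpa using hlt)]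

lemma vfun_injective {a : α} {l : List α} (h : (a :: l).Nodup) :
    Function.Injective (vfun a l) := by
  intro k1 k2 he
  unfold vfun at he
  rw [List.getD_eq_getElem _ _ (by simpa using k1.isLt),
      List.getD_eq_getElem _ _ (by simpa using k2.isLt)] at he
  have hinj := List.nodup_iff_injective_get.mp h
  have : (a :: l).get ⟨k1.val, by simpa using k1.isLt⟩
       = (a :: l).get ⟨k2.val, by simpa using k2.isLt⟩ := by
    simpa [List.get_eq_getElem] using he
  have := hinj this
  exact Fin.ext (congrArg Fin.val this)

lemma vfun_chain {E : α → α → Prop} {a : α} {l : List α}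
    (h : List.Chain' E (a :: l ++ [a])) (k : Fin (l.length + 1)) :
    E (vfun a l k) (vfun a l (k + 1)) := by
  rw [vfun_eq, vfun_succ_eq]
  rw [List.chain'_iff_get] at h
  have hlen : (a :: l ++ [a]).length = l.length + 2 := by simp
  have hlt : k.val < (a :: l ++ [a]).length - 1 := by
    rw [hlen]; simpa using k.isLt
  have := h k.val hlt
  rw [List.get_eq_getElem, List.get_eq_getElem] at this
  rw [List.getD_eq_getElem _ _ (by rw [hlen]; omega),
      List.getD_eq_getElem _ _ (by rw [hlen]; omega)]
  exact this

lemma wsuml_eq_sum (w : α → α → ZMod 2) (d : α) :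
    ∀ L : List α, wsuml w L =
      ∑ i ∈ Finset.range (L.length - 1), w (L.getD i d) (L.getD (i + 1) d) := by
  intro L
  match L with
  | [] => simp
  | [a] => simp
  | a :: b :: t =>
    rw [wsuml_cons_cons, wsuml_eq_sum w d (b :: t)]
    have hlen : (a :: b :: t).length - 1 = ((b :: t).length - 1) + 1 := by simp
    rw [hlen, Finset.sum_range_succ']
    have h0 : w ((a :: b :: t).getD 0 d) ((a :: b :: t).getD (0 + 1) d) = w a b := by
      simp [List.getD]
    rw [h0]
    have hsh : ∀ i, (a :: b :: t).getD (i + 1) d = (b :: t).getD i d := by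
      intro i; simp [List.getD]
    have : ∀ i, w ((a :: b :: t).getD (i + 1) d) ((a :: b :: t).getD (i + 1 + 1) d)
        = w ((b :: t).getD i d) ((b :: t).getD (i + 1) d) := by
      intro i; rw [hsh, hsh]
    rw [Finset.sum_congr rfl (fun i _ => this i)]
    ring

lemma wsuml_cycle_eq_fin_sum (w : α → α → ZMod 2) (a : α) (l : List α) :
    wsuml w (a :: l ++ [a]) = ∑ k : Fin (l.length + 1), w (vfun a l k) (vfun a l (k + 1)) := by
  rw [wsuml_eq_sum w a]
  have hlen : (a :: l ++ [a]).length - 1 = l.length + 1 := by simp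
  rw [hlen, ← Fin.sum_univ_eq_sum_range
    (fun i => w ((a :: l ++ [a]).getD i a) ((a :: l ++ [a]).getD (i + 1) a))]
  refine Finset.sum_congr rfl (fun k _ => ?_)
  rw [vfun_eq, vfun_succ_eq]

lemma natcast_even_zmod2 {c : ℕ} (h : Even c) : (c : ZMod 2) = 0 := by
  obtain ⟨d, rfl⟩ := h
  push_cast
  have : (d : ZMod 2) + d = 0 := by
    have : ∀ a : ZMod 2, a + a = 0 := by decide
    exact this _
  exact this

lemma sum_bool_eq_zero {m : ℕ} (ε : Fin (m + 1) → Bool)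
    (h : ¬ Odd (Nat.card {k : Fin (m + 1) // ε k = true})) :
    ∑ k : Fin (m + 1), (if ε k = true then (1 : ZMod 2) else 0) = 0 := by
  classical
  rw [Finset.sum_boole]
  have hc : Nat.card {k : Fin (m + 1) // ε k = true}
      = (Finset.univ.filter (fun k => ε k = true)).card := by
    rw [Nat.card_eq_fintype_card, Fintype.card_subtype]
  rw [hc] at h
  exact natcast_even_zmod2 (Nat.not_odd_iff_even.mp h)

lemma parity_contra {m : ℕ} (P : Fin (m + 1) → Prop) [DecidablePred P]
    (F₀ : Fin (m + 1) → Bool)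
    (k₀ : Fin (m + 1)) (hP : ∀ k, P k ↔ k = k₀)
    (h1 : ¬ Odd (Nat.card {k : Fin (m + 1) // (if P k then true else F₀ k) = true}))
    (h2 : ¬ Odd (Nat.card {k : Fin (m + 1) // (if P k then false else F₀ k) = true})) :
    False := by
  rw [Nat.card_eq_fintype_card, Fintype.card_subtype] at h1 h2
  set Tt := Finset.univ.filter (fun k => (if P k then true else F₀ k) = true) with hTt
  set Tf := Finset.univ.filter (fun k => (if P k then false else F₀ k) = true) with hTf
  have hins : Tt = insert k₀ Tf := by
    ext k
    simp only [hTt, hTf, Finset.mem_filter, Finset.mem_univ, true_and, Finset.mem_insert]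
    by_cases hk : P k
    · rw [if_pos hk, if_pos hk]
      simp [(hP k).mp hk]
    · rw [if_neg hk, if_neg hk]
      have : ¬ k = k₀ := fun he => hk ((hP k).mpr he)
      simp [this]
  have hnotmem : k₀ ∉ Tf := by
    simp only [hTf, Finset.mem_filter, Finset.mem_univ, true_and]
    rw [if_pos ((hP k₀).mpr rfl)]
    simp
  rw [hins, Finset.card_insert_of_notMem hnotmem] at h1
  rw [Nat.not_odd_iff_even] at h1 h2
  rw [Nat.even_add_one] at h1
  exact h1 h2


end S16


/-- If a Boolean network has a cyclic attractor (in particular if it has no fixed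
point), then its global interaction graph `G(f)` has a negative cycle: an elementary
directed cycle together with a choice of a sign for each edge (realized in `G(f)`),
with an odd number of negative edges. -/

theorem stmt_16 (n : ℕ) (f : St n → St n)
    (hattr : ∃ A : Set (St n), IsCyclicAttractor f A) :
    ∃ (m : ℕ) (v : Fin (m + 1) → Fin n) (ε : Fin (m + 1) → Bool),
      Function.Injective v ∧
      (∀ k, if ε k then gEdgeNeg f (v k) (v (k + 1)) else gEdgePos f (v k) (v (k + 1))) ∧
      Odd (Nat.card {k : Fin (m + 1) // ε k = true}) := by
  classical
  by_contra hgoal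
  have Hmain : ∀ (m : ℕ) (v : Fin (m + 1) → Fin n) (ε : Fin (m + 1) → Bool),
      Function.Injective v →
      (∀ k, if ε k then gEdgeNeg f (v k) (v (k + 1)) else gEdgePos f (v k) (v (k + 1))) →
      ¬ Odd (Nat.card {k : Fin (m + 1) // ε k = true}) := by
    intro m v ε hinj hedges hodd
    exact hgoal ⟨m, v, ε, hinj, hedges, hodd⟩
  obtain ⟨A, ⟨⟨a, haA⟩, hclosed, hconn, hnotsingle⟩⟩ := hattr
  set U : Finset (Fin n) := Finset.univ.filter (fun i => ∃ x ∈ A, x i ≠ a i) with hU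
  have hUnotmem : ∀ i, i ∉ U → ∀ x ∈ A, x i = a i := by
    intro i hi x hx
    by_contra hne
    exact hi (by
      rw [hU, Finset.mem_filter]
      exact ⟨Finset.mem_univ i, x, hx, hne⟩)
  set ρ : St n → St n := fun x j => if j ∈ U then x j else a j with hρ
  set g : St n → St n := fun x i => if i ∈ U then f (ρ x) i else a i with hg
  have hρA : ∀ x ∈ A, ρ x = x := by
    intro x hx
    funext j
    by_cases hj : j ∈ U
    · simp [hρ, hj]
    · simp only [hρ, if_neg hj]
      exact (hUnotmem j hj x hx).symm
  have hfA : ∀ x ∈ A, ∀ i, i ∉ U → f x i = x i := by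
    intro x hx i hi
    by_contra hne
    have hmem := hclosed x hx i hne
    have h1 : (x + uv i) i = a i := hUnotmem i hi _ hmem
    rw [S16.add_uv_same] at h1
    rw [hUnotmem i hi x hx] at h1
    simp at h1
  have hgA : ∀ x ∈ A, g x = f x := by
    intro x hx
    funext i
    by_cases hi : i ∈ U
    · simp [hg, hi, hρA x hx]
    · simp only [hg, if_neg hi]
      rw [hfA x hx i hi, hUnotmem i hi x hx]
  have hgclosed : ∀ x ∈ A, ∀ i, g x i ≠ x i → x + uv i ∈ A := by
    intro x hx i hi
    rw [hgA x hx] at hi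
    exact hclosed x hx i hi
  have hAreachg : ∀ x ∈ A, ∀ y, Reach f x y → y ∈ A ∧ Reach g x y := by
    intro x hx y hr
    induction hr with
    | refl => exact ⟨hx, .refl⟩
    | @tail b c hsteps hstep ih =>
      obtain ⟨i, hi, rfl⟩ := hstep
      obtain ⟨hbA, hrg⟩ := ih
      refine ⟨hclosed b hbA i hi, hrg.tail ⟨i, ?_, rfl⟩⟩
      rw [hgA b hbA]
      exact hi
  have hedge_iU : ∀ {j i : Fin n} {x : St n}, hasEdge g x j i → i ∈ U := by
    intro j i x h
    by_contra hi
    exact h (by simp [hasEdge, hg, hi])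
  have hedge_jU : ∀ {j i : Fin n} {x : St n}, hasEdge g x j i → j ∈ U := by
    intro j i x h
    by_contra hj
    apply h
    have hρe : ρ (x + uv j) = ρ x := by
      funext j'
      by_cases hj' : j' ∈ U
      · simp only [hρ, if_pos hj']
        exact S16.add_uv_other x (by rintro rfl; exact hj hj')
      · simp [hρ, hj']
    show g (x + uv j) i = g x i
    simp [hg, hρe]
  have hρuv : ∀ (x : St n) (j : Fin n), j ∈ U → ρ (x + uv j) = ρ x + uv j := by
    intro x j hj
    funext j'
    by_cases hjj : j' = j
    · subst hjj
      simp only [hρ, if_pos hj]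
      rw [S16.add_uv_same, S16.add_uv_same]
      simp [hρ, hj]
    · rw [S16.add_uv_other _ hjj]
      by_cases hj' : j' ∈ U
      · simp only [hρ, if_pos hj']
        exact S16.add_uv_other x hjj
      · simp [hρ, hj']
  have hEdgeF : ∀ {j i : Fin n} {x : St n}, hasEdge g x j i → hasEdge f (ρ x) j i := by
    intro j i x h
    have hj := hedge_jU h
    have hi := hedge_iU h
    unfold hasEdge at h ⊢
    simp only [hg, if_pos hi, hρuv x j hj] at h
    exact h
  have hρsame : ∀ {j : Fin n} (x : St n), j ∈ U → ρ x j = x j := by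
    intro j x hj
    simp [hρ, hj]
  have hgval : ∀ {i : Fin n} (x : St n), i ∈ U → g x i = f (ρ x) i := by
    intro i x hi
    simp [hg, hi]
  have hgNegF : ∀ {j i : Fin n}, gEdgeNeg g j i → gEdgeNeg f j i := by
    rintro j i ⟨x, he, hs⟩
    refine ⟨ρ x, hEdgeF he, ?_⟩
    rw [hρsame x (hedge_jU he), ← hgval x (hedge_iU he)]
    exact hs
  have hgPosF : ∀ {j i : Fin n}, gEdgePos g j i → gEdgePos f j i := by
    rintro j i ⟨x, he, hs⟩
    refine ⟨ρ x, hEdgeF he, ?_⟩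
    rw [hρsame x (hedge_jU he), ← hgval x (hedge_iU he)]
    exact hs
  set E : Fin n → Fin n → Prop := fun j i => ∃ x, hasEdge g x j i with hE
  set w : Fin n → Fin n → ZMod 2 := fun j i => if gEdgeNeg g j i then 1 else 0 with hw
  have hedge_or : ∀ {j i : Fin n}, E j i → gEdgePos g j i ∨ gEdgeNeg g j i := by
    rintro j i ⟨x, he⟩
    by_cases hs : x j = g x i
    · exact Or.inl ⟨x, he, hs⟩
    · exact Or.inr ⟨x, he, hs⟩
  have Hmaing : ∀ (m : ℕ) (v : Fin (m + 1) → Fin n) (ε : Fin (m + 1) → Bool),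
      Function.Injective v →
      (∀ k, if ε k then gEdgeNeg g (v k) (v (k + 1)) else gEdgePos g (v k) (v (k + 1))) →
      ¬ Odd (Nat.card {k : Fin (m + 1) // ε k = true}) := by
    intro m v ε hinj hedges
    refine Hmain m v ε hinj (fun k => ?_)
    have hk := hedges k
    cases hεk : ε k with
    | true =>
      rw [hεk, if_pos rfl] at hk
      rw [if_pos rfl]
      exact hgNegF hk
    | false =>
      rw [hεk, if_neg (by simp)] at hk
      rw [if_neg (by simp)]
      exact hgPosF hk
  have Hel : ∀ (a' : Fin n) (l : List (Fin n)), List.Chain' E (a' :: l ++ [a']) →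
      (a' :: l).Nodup → S16.wsuml w (a' :: l ++ [a']) = 0 := by
    intro a' l hch hnd
    set vv := S16.vfun a' l with hvv
    set ε : Fin (l.length + 1) → Bool :=
      fun k => decide (gEdgeNeg g (vv k) (vv (k + 1))) with hε
    have hedges : ∀ k, if ε k then gEdgeNeg g (vv k) (vv (k + 1))
        else gEdgePos g (vv k) (vv (k + 1)) := by
      intro k
      have hEk : E (vv k) (vv (k + 1)) := S16.vfun_chain hch k
      by_cases hneg : gEdgeNeg g (vv k) (vv (k + 1))
      · simp [hε, hneg]
      · have hpos : gEdgePos g (vv k) (vv (k + 1)) := (hedge_or hEk).resolve_right hneg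
        simp [hε, hneg, hpos]
    have hodd := Hmaing _ vv ε (S16.vfun_injective hnd) hedges
    have hsum := S16.sum_bool_eq_zero ε hodd
    rw [S16.wsuml_cycle_eq_fin_sum, ← hsum]
    refine Finset.sum_congr rfl (fun k _ => ?_)
    by_cases hneg : gEdgeNeg g (vv k) (vv (k + 1)) <;> simp [hw, hε, hneg, ← hvv]
  have Hcw : ∀ (C : List (Fin n)) (u : Fin n), List.Chain' E C → C.head? = some u →
      C.getLast? = some u → S16.wsuml w C = 0 := by
    intro C u hch hh hl
    obtain ⟨t, rfl⟩ := S16.eq_cons_of_head? hh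
    cases t with
    | nil => simp
    | cons b t' =>
      have hl' : (b :: t').getLast? = some u := by
        rw [← hl]
        rfl
      obtain ⟨p, hp⟩ := S16.eq_concat_of_getLast? hl'
      rw [hp] at hch ⊢
      exact S16.closed_walk_sum E w Hel p.length u p le_rfl hch
  have hUne : U.Nonempty := by
    have hex : ∃ x ∈ A, x ≠ a := by
      by_contra hall
      push_neg at hall
      refine hnotsingle ⟨a, Set.ext (fun y => ⟨fun hy => hall y hy, fun hy => ?_⟩)⟩
      rw [Set.mem_singleton_iff] at hy
      rw [hy]
      exact haA
    obtain ⟨x, hxA, hxa⟩ := hex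
    obtain ⟨i, hi⟩ := Function.ne_iff.mp hxa
    exact ⟨i, by
      rw [hU, Finset.mem_filter]
      exact ⟨Finset.mem_univ i, x, hxA, hi⟩⟩
  set R : Fin n → Finset (Fin n) :=
    fun u => Finset.univ.filter (fun p => Relation.ReflTransGen E p u) with hR
  obtain ⟨v, hvU, hvmin⟩ := U.exists_min_image (fun u => (R u).card) hUne
  set S : Finset (Fin n) :=
    Finset.univ.filter (fun u => Relation.ReflTransGen E u v ∧ Relation.ReflTransGen E v u)
    with hS
  have hvS : v ∈ S := by
    rw [hS, Finset.mem_filter]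
    exact ⟨Finset.mem_univ v, .refl, .refl⟩
  have hsrc : ∀ j i, E j i → i ∈ S → j ∈ S := by
    intro j i hji hiS
    rw [hS, Finset.mem_filter] at hiS ⊢
    obtain ⟨-, hiv, hvi⟩ := hiS
    have hjv : Relation.ReflTransGen E j v := Relation.ReflTransGen.head hji hiv
    have hjU : j ∈ U := by
      obtain ⟨x, hx⟩ := hji
      exact hedge_jU hx
    have hsub : R j ⊆ R v := by
      intro p hp
      rw [hR, Finset.mem_filter] at hp ⊢
      exact ⟨Finset.mem_univ p, hp.2.trans hjv⟩
    have hcard : (R v).card ≤ (R j).card := hvmin j hjU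
    have heq : R j = R v := Finset.eq_of_subset_of_card_le hsub hcard
    have hvj : Relation.ReflTransGen E v j := by
      have hm : v ∈ R v := by
        rw [hR, Finset.mem_filter]
        exact ⟨Finset.mem_univ v, .refl⟩
      rw [← heq, hR, Finset.mem_filter] at hm
      exact hm.2
    exact ⟨Finset.mem_univ j, hjv, hvj⟩
  have hnoboth : ∀ j i, E j i → i ∈ S → ¬ (gEdgeNeg g j i ∧ gEdgePos g j i) := by
    rintro j i hji hiS ⟨hneg, hpos⟩
    have hjS : j ∈ S := hsrc j i hji hiS
    rw [hS, Finset.mem_filter] at hiS hjS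
    have hij : Relation.ReflTransGen E i j := hiS.2.1.trans hjS.2.2
    obtain ⟨L, hLch, hLh, hLl⟩ := S16.walk_of_rg E hij
    obtain ⟨L', hch', hnd', hh', hl'⟩ :=
      S16.exists_elementary_path E L.length L le_rfl hLch (by rintro rfl; simp at hLh)
    rw [hLh] at hh'
    rw [hLl] at hl'
    obtain ⟨p, hp⟩ := S16.eq_concat_of_getLast? hl'
    have hchC : List.Chain' E (j :: p ++ [j]) := by
      rw [hp] at hch'
      have hh'' : (p ++ [j]).head? = some i := by rw [← hp]; exact hh'
      show List.Chain' E (j :: (p ++ [j]))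
      rw [List.chain'_cons']
      refine ⟨?_, hch'⟩
      intro b hb
      rw [hh''] at hb
      simp only [Option.mem_def, Option.some.injEq] at hb
      subst hb
      exact hji
    have hndC : (j :: p).Nodup := by
      rw [hp] at hnd'
      exact (List.perm_append_singleton j p).nodup hnd' 
    set vv := S16.vfun j p with hvvdef
    have hvv0 : vv 0 = j := rfl
    have hvv1 : vv (0 + 1) = i := by
      rw [hvvdef, S16.vfun_succ_eq]
      cases p with
      | nil =>
        have : i = j := by
          rw [hp] at hh'
          simp at hh'
          exact hh'.symm
        simp [List.getD, this]
      | cons q p' =>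
        have hq : q = i := by
          rw [hp] at hh'
          simp at hh'
          exact hh'
        simp [List.getD, hq]
    have hk0 : ∀ k, (vv k = j ∧ vv (k + 1) = i) ↔ k = 0 := by
      intro k
      constructor
      · rintro ⟨h1, -⟩
        exact S16.vfun_injective hndC (by show vv k = vv 0; rw [h1, hvv0])
      · rintro rfl
        exact ⟨hvv0, hvv1⟩
    have hedges : ∀ (b : Bool) (k : Fin (p.length + 1)),
        if (if vv k = j ∧ vv (k + 1) = i then b
            else decide (gEdgeNeg g (vv k) (vv (k + 1)))) then
          gEdgeNeg g (vv k) (vv (k + 1))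
        else gEdgePos g (vv k) (vv (k + 1)) := by
      intro b k
      have hEk : E (vv k) (vv (k + 1)) := S16.vfun_chain hchC k
      by_cases hkk : vv k = j ∧ vv (k + 1) = i
      · rw [if_pos hkk]
        obtain ⟨h1, h2⟩ := hkk
        rw [h1, h2]
        cases b with
        | true => simpa using hneg
        | false => simpa using hpos
      · rw [if_neg hkk]
        by_cases hn : gEdgeNeg g (vv k) (vv (k + 1))
        · have hd : decide (gEdgeNeg g (vv k) (vv (k + 1))) = true := by
            simp [hn]
          rw [hd, if_pos rfl]
          exact hn
        · have hd : decide (gEdgeNeg g (vv k) (vv (k + 1))) = false := by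
            simp [hn]
          rw [hd, if_neg (by simp)]
          exact (hedge_or hEk).resolve_right hn
    have hodd1 := Hmaing p.length vv _ (S16.vfun_injective hndC) (hedges true)
    have hodd2 := Hmaing p.length vv _ (S16.vfun_injective hndC) (hedges false)
    exact S16.parity_contra (fun k => vv k = j ∧ vv (k + 1) = i)
      (fun k => decide (gEdgeNeg g (vv k) (vv (k + 1)))) 0 hk0 hodd1 hodd2
  set σfun : St n := fun u =>
    if h : Relation.ReflTransGen E v u then S16.wsuml w (S16.walk_of_rg E h).choose else 0
    with hσ
  have hzmodcancel : ∀ x y : ZMod 2, x + y = 0 → x = y := by decide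
  have hσuniq : ∀ u, Relation.ReflTransGen E v u → Relation.ReflTransGen E u v →
      ∀ L, List.Chain' E L → L.head? = some v → L.getLast? = some u →
      S16.wsuml w L = σfun u := by
    intro u hvu huv L hch hh hl
    obtain ⟨Q, hQch, hQh, hQl⟩ := S16.walk_of_rg E huv
    have key : ∀ L', List.Chain' E L' → L'.head? = some v → L'.getLast? = some u →
        S16.wsuml w L' + S16.wsuml w Q = 0 := by
      intro L' hch' hh' hl'
      obtain ⟨p, hp⟩ := S16.eq_concat_of_getLast? hl'
      obtain ⟨q, hq⟩ := S16.eq_cons_of_head? hQh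
      have hsum : S16.wsuml w (p ++ u :: q) = S16.wsuml w L' + S16.wsuml w Q := by
        rw [S16.wsuml_append w p q u, ← hp, ← hq]
      have hchC : List.Chain' E (p ++ u :: q) := by
        rw [hp, List.chain'_append] at hch'
        rw [hq] at hQch
        rw [List.chain'_append]
        refine ⟨hch'.1, hQch, fun x hx y hy => ?_⟩
        simp only [List.head?_cons, Option.mem_def, Option.some.injEq] at hy
        subst hy
        exact hch'.2.2 x hx u (by simp)
      have hhC : (p ++ u :: q).head? = some v := by
        cases p with
        | nil =>
          rw [hp] at hh'
          simp only [List.nil_append] at hh' ⊢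
          simpa using hh'
        | cons c p' =>
          rw [hp] at hh'
          simpa using hh'
      have hlC : (p ++ u :: q).getLast? = some v := by
        rw [List.getLast?_append]
        rw [hq] at hQl
        rw [hQl]
        rfl
      have := Hcw _ v hchC hhC hlC
      rw [hsum] at this
      exact this
    have h1 := key L hch hh hl
    have hσu : σfun u = S16.wsuml w (S16.walk_of_rg E hvu).choose := by
      rw [hσ]
      exact dif_pos hvu
    obtain ⟨hch0, hh0, hl0⟩ := (S16.walk_of_rg E hvu).choose_spec
    have h2 := key _ hch0 hh0 hl0
    rw [hσu]
    exact (hzmodcancel _ _ h1).trans (hzmodcancel _ _ h2).symm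
  have hσedge : ∀ j i, E j i → j ∈ S → i ∈ S → σfun i = σfun j + w j i := by
    intro j i hji hjS hiS
    rw [hS, Finset.mem_filter] at hjS hiS
    obtain ⟨hch0, hh0, hl0⟩ := (S16.walk_of_rg E hjS.2.2).choose_spec
    set Lj := (S16.walk_of_rg E hjS.2.2).choose with hLj
    have hch1 : List.Chain' E (Lj ++ [i]) := by
      rw [List.chain'_append]
      refine ⟨hch0, List.chain'_singleton i, fun x hx y hy => ?_⟩
      simp only [List.head?_cons, Option.mem_def, Option.some.injEq] at hy
      subst hy
      rw [hl0] at hx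
      simp only [Option.mem_def, Option.some.injEq] at hx
      subst hx
      exact hji
    have hh1 : (Lj ++ [i]).head? = some v := by
      rw [List.head?_append, hh0]
      rfl
    have hl1 : (Lj ++ [i]).getLast? = some i := List.getLast?_concat
    have hs1 : S16.wsuml w (Lj ++ [i]) = S16.wsuml w Lj + w j i := by
      obtain ⟨p, hp⟩ := S16.eq_concat_of_getLast? hl0
      rw [hp]
      have hsh : (p ++ [j]) ++ [i] = p ++ j :: [i] := by simp
      rw [hsh, S16.wsuml_append w p [i] j]
      congr 1
      simp [S16.wsuml]
    have hui := hσuniq i (hjS.2.2.tail hji) hiS.2.1 (Lj ++ [i]) hch1 hh1 hl1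
    have huj := hσuniq j hjS.2.2 hjS.2.1 Lj hch0 hh0 hl0
    rw [← hui, hs1, huj]
  have hsign : ∀ j i x, i ∈ S → hasEdge g x j i → (g x i = x j ↔ w j i = 0) := by
    intro j i x hiS he
    have hEji : E j i := ⟨x, he⟩
    by_cases hneg : gEdgeNeg g j i
    · have hw1 : w j i = 1 := by simp [hw, hneg]
      rw [hw1]
      constructor
      · intro heq
        exact absurd ⟨hneg, ⟨x, he, heq.symm⟩⟩ (hnoboth j i hEji hiS)
      · intro h10
        exact absurd h10 (by decide)
    · have hw0 : w j i = 0 := by simp [hw, hneg]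
      rw [hw0]
      refine ⟨fun _ => rfl, fun _ => ?_⟩
      by_contra hne
      exact hneg ⟨x, he, fun hxe => hne hxe.symm⟩
  set g' : St n → St n := fun x i => g (x + σfun) i + σfun i with hg'
  have hstep' : ∀ x i, (g' x i ≠ x i ↔ g (x + σfun) i ≠ (x + σfun) i) := by
    intro x i
    have h2 : ∀ A X s : ZMod 2, ((A + s ≠ X) ↔ (A ≠ X + s)) := by decide
    exact h2 (g (x + σfun) i) (x i) (σfun i)
  have hA'closed : ∀ x, x + σfun ∈ A → ∀ i, g' x i ≠ x i → (x + uv i) + σfun ∈ A := by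
    intro x hx i hi
    rw [hstep' x i] at hi
    have := hgclosed _ hx i hi
    rw [add_right_comm]
    exact this
  have hmapReach : ∀ b c, Reach g b c → Reach g' (b + σfun) (c + σfun) := by
    intro b c hr
    induction hr with
    | refl => exact .refl
    | @tail p q hsteps hstep ih =>
      obtain ⟨i, hi, rfl⟩ := hstep
      refine ih.tail ⟨i, ?_, by rw [add_right_comm]⟩
      rw [hstep' (p + σfun) i, S16.add_add_self]
      exact hi
  have hreach' : ∀ x, x + σfun ∈ A → ∀ y, y + σfun ∈ A → Reach g' x y := by
    intro x hx y hy
    have h1 : Reach g (x + σfun) (y + σfun) := (hAreachg _ hx _ (hconn _ hx _ hy)).2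
    have h2 := hmapReach _ _ h1
    rwa [S16.add_add_self, S16.add_add_self] at h2
  have hA'reach : ∀ x, x + σfun ∈ A → ∀ y, Reach g' x y → y + σfun ∈ A := by
    intro x hx y hr
    induction hr with
    | refl => exact hx
    | @tail p q hsteps hstep ih =>
      obtain ⟨i, hi, rfl⟩ := hstep
      exact hA'closed p ih i hi
  set hnet : St n → St n := fun x i => if i ∈ S then g' x i else x i with hhnet
  have hedgeg' : ∀ (x : St n) (j i : Fin n), g' (x + uv j) i ≠ g' x i → E j i := by
    intro x j i hne
    refine ⟨x + σfun, ?_⟩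
    show g ((x + σfun) + uv j) i ≠ g (x + σfun) i
    intro heq
    apply hne
    show g ((x + uv j) + σfun) i + σfun i = g (x + σfun) i + σfun i
    rw [add_right_comm, heq]
  have hmono : ∀ x y : St n, (∀ i', x i' = 1 → y i' = 1) →
      ∀ i', hnet x i' = 1 → hnet y i' = 1 := by
    intro x y hle i'
    by_cases hiS : i' ∈ S
    · simp only [hhnet, if_pos hiS]
      refine S16.mono_of_unate (fun z => g' z i') ?_ x y hle
      intro z j hne
      have hEji : E j i' := hedgeg' z j i' hne
      have hjS : j ∈ S := hsrc j i' hEji hiS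
      have hhe : hasEdge g (z + σfun) j i' := by
        show g ((z + σfun) + uv j) i' ≠ g (z + σfun) i'
        intro heq
        apply hne
        show g ((z + uv j) + σfun) i' + σfun i' = g (z + σfun) i' + σfun i'
        rw [add_right_comm, heq]
      have hsig := hsign j i' (z + σfun) hiS hhe
      have hpot := hσedge j i' hEji hjS hiS
      show g (z + σfun) i' + σfun i' = z j
      have hzj : (z + σfun) j = z j + σfun j := rfl
      by_cases hw0 : w j i' = 0
      · have ha : g (z + σfun) i' = (z + σfun) j := hsig.mpr hw0
        rw [ha, hzj, hpot, hw0]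
        have hcalc : ∀ u s : ZMod 2, u + s + (s + 0) = u := by decide
        exact hcalc _ _
      · have hw1 : w j i' = 1 := S16.zmod2_eq_one_of_ne_zero hw0
        have ha : g (z + σfun) i' ≠ (z + σfun) j := fun h => hw0 (hsig.mp h)
        have ha' : g (z + σfun) i' = (z + σfun) j + 1 := S16.zmod2_eq_add_one_of_ne ha
        rw [ha', hzj, hpot, hw1]
        have hcalc : ∀ u s : ZMod 2, u + s + 1 + (s + 1) = u := by decide
        exact hcalc _ _
    · simp only [hhnet, if_neg hiS]
      exact hle i'
  obtain ⟨z, hrz, hzfix⟩ := S16.mono_reach hnet hmono (a + σfun)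
  have hhsteps : ∀ x y, Reach hnet x y → Reach g' x y := by
    intro x y hr
    induction hr with
    | refl => exact .refl
    | @tail p q hsteps hstep ih =>
      obtain ⟨i, hi, rfl⟩ := hstep
      by_cases hiS : i ∈ S
      · refine ih.tail ⟨i, ?_, rfl⟩
        simpa [hhnet, hiS] using hi
      · exfalso
        apply hi
        simp [hhnet, hiS]
  have hx0 : (a + σfun) + σfun ∈ A := by
    rw [S16.add_add_self]
    exact haA
  have hzA : z + σfun ∈ A := hA'reach _ hx0 _ (hhsteps _ _ hrz)
  have hzfixS : ∀ i ∈ S, g' z i = z i := by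
    intro i hiS
    have := congrFun hzfix i
    simpa [hhnet, hiS] using this
  have hindep : ∀ i ∈ S, ∀ x y : St n, (∀ j ∈ S, x j = y j) → g' x i = g' y i := by
    intro i hiS
    refine S16.indep_of_no_edge (fun x => g' x i) S ?_
    intro x j hjS
    by_contra hne
    exact hjS (hsrc j i (hedgeg' x j i hne) hiS)
  have hfreeze : ∀ y, Reach g' z y → ∀ i ∈ S, y i = z i := by
    intro y hr
    induction hr with
    | refl => intro i _; rfl
    | @tail p q hsteps hstep ih =>
      obtain ⟨j, hj, rfl⟩ := hstep
      intro i hiS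
      by_cases hjS : j ∈ S
      · exfalso
        apply hj
        have h1 : g' p j = g' z j := hindep j hjS p z (fun j' hj' => ih j' hj')
        rw [h1, hzfixS j hjS]
        exact (ih j hjS).symm
      · have hij : i ≠ j := by rintro rfl; exact hjS hiS
        rw [S16.add_uv_other p hij]
        exact ih i hiS
  have hvU' : ∃ x ∈ A, x v ≠ a v := by
    rw [hU, Finset.mem_filter] at hvU
    exact hvU.2
  obtain ⟨p, hpA, hpv⟩ := hvU'
  have hp' : (p + σfun) + σfun ∈ A := by
    rw [S16.add_add_self]
    exact hpA
  have h1 : (p + σfun) v = z v := hfreeze _ (hreach' z hzA _ hp') v hvS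
  have h2 : (a + σfun) v = z v := hfreeze _ (hreach' z hzA _ hx0) v hvS
  apply hpv
  have h3 : (p + σfun) v = (a + σfun) v := by rw [h1, h2]
  have h4 : p v + σfun v = a v + σfun v := h3
  exact add_right_cancel h4
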